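/- Let ε > 0, g : ℕ → ℕ, M ∈ ℤ₊, D > 0, and θ, ψ : (0,∞) → ℤ₊. Let (α_n) be a sequence in (0,1) such that ∏_{n=1}^∞ (1 − α_n) = 0 with rate of convergence θ (i.e. ∏_{j=1}^n (1−α_j) ≤ δ for all n ≥ θ(δ)). Define Θ = max{θ(Dε/(3M)) + 1, ψ(ε/3)} and Δ = ε / (3·g_ε(Θ − ψ(ε/3))) where g_ε(n) = n + g(n + ψ(ε/3)). Suppose t_n ≤ ε/3 for all n ≥ ψ(ε/3), D ≤ ∏_{n=1}^{ψ(ε/3)−1}(1 − α_n), and (s_n) satisfies 0 ≤ s_n ≤ M and s_{n+1} ≤ (1 − α_n)·s_n + α_n·t_n + Δ for all n ≥ 1. Then s_n ≤ ε for all n ∈ [Θ, Θ + g(Θ)]. -/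

import Mathlib

theorem stmt3 (ε : ℝ) (hε : 0 < ε) (g : ℕ → ℕ) (M : ℕ) (hM : 0 < M) (D : ℝ) (hD : 0 < D)
    (α t s : ℕ → ℝ) (θ ψ : ℝ → ℕ)
    (hθpos : ∀ e, 0 < θ e) (hψpos : ∀ e, 0 < ψ e)
    (hα : ∀ n, 1 ≤ n → α n ∈ Set.Ioo (0:ℝ) 1)
    (hθ : ∀ δ : ℝ, 0 < δ → ∀ n : ℕ, θ δ ≤ n → ∏ j ∈ Finset.Icc 1 n, (1 - α j) ≤ δ)
    (ht : ∀ n, ψ (ε/3) ≤ n → t n ≤ ε/3)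
    (hDle : D ≤ ∏ n ∈ Finset.Icc 1 (ψ (ε/3) - 1), (1 - α n))
    (hs : ∀ n, 1 ≤ n → 0 ≤ s n ∧ s n ≤ M)
    (Θ : ℕ) (hΘ : Θ = max (θ (D * ε / (3 * M)) + 1) (ψ (ε/3)))
    (Δ : ℝ) (hΔ : Δ = ε / (3 * ((Θ - ψ (ε/3) : ℕ) + g ((Θ - ψ (ε/3)) + ψ (ε/3)) : ℕ)))
    (hrec : ∀ n, 1 ≤ n → s (n+1) ≤ (1 - α n) * s n + α n * t n + Δ) :
    ∀ n, Θ ≤ n → n ≤ Θ + g Θ → s n ≤ ε := by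
  set N := ψ (ε/3) with hN
  have hN1 : 1 ≤ N := hψpos _
  have hΘN : N ≤ Θ := by rw [hΘ]; exact le_max_right _ _
  have hθΘ : θ (D * ε / (3 * M)) + 1 ≤ Θ := by rw [hΘ]; exact le_max_left _ _
  have hMpos : (0:ℝ) < M := by exact_mod_cast hM
  have hsub : Θ - N + N = Θ := Nat.sub_add_cancel hΘN
  set K : ℕ := (Θ - N) + g Θ with hK
  have hΔ' : Δ = ε / (3 * K) := by rw [hΔ, hsub]
  have hΔ0 : 0 ≤ Δ := by
    rw [hΔ']
    positivity
  have hΔK : (K : ℝ) * Δ ≤ ε / 3 := by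
    rcases Nat.eq_zero_or_pos K with h0 | hpos
    · rw [h0]; simp; positivity
    · have hKpos : (0:ℝ) < K := by exact_mod_cast hpos
      rw [hΔ']
      have hKne : (K:ℝ) ≠ 0 := hKpos.ne'
      exact le_of_eq (by field_simp)
  -- the main unrolling claim
  have claim : ∀ k : ℕ, s (N + k) ≤ (∏ j ∈ Finset.Ico N (N + k), (1 - α j)) * s N
      + ε / 3 * (1 - ∏ j ∈ Finset.Ico N (N + k), (1 - α j)) + (k : ℝ) * Δ := by
    intro k
    induction k with
    | zero => simp
    | succ k ih =>
      have hNk : 1 ≤ N + k := by omega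
      have ha := hα (N + k) hNk
      obtain ⟨ha0, ha1⟩ := ha
      have hPnn : 0 ≤ ∏ j ∈ Finset.Ico N (N + k), (1 - α j) := by
        apply Finset.prod_nonneg
        intro j hj
        have hj1 : 1 ≤ j := by
          have := (Finset.mem_Ico.mp hj).1; omega
        have := (hα j hj1).2
        linarith
      have hprod : ∏ j ∈ Finset.Ico N (N + k + 1), (1 - α j)
          = (∏ j ∈ Finset.Ico N (N + k), (1 - α j)) * (1 - α (N + k)) := by
        rw [Finset.prod_Ico_succ_top (by omega)]
      have h1 := hrec (N + k) hNk
      have h2 := ht (N + k) (by omega)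
      have hsN0 := (hs N hN1).1
      rw [show N + (k+1) = N + k + 1 from rfl, hprod]
      push_cast
      set P := ∏ j ∈ Finset.Ico N (N + k), (1 - α j)
      have hmul : (1 - α (N + k)) * s (N + k) ≤ (1 - α (N + k)) * (P * s N + ε / 3 * (1 - P) + (k:ℝ) * Δ) :=
        mul_le_mul_of_nonneg_left ih (by linarith)
      have hkΔ : 0 ≤ (k:ℝ) * Δ := mul_nonneg (by positivity) hΔ0
      nlinarith [mul_le_mul_of_nonneg_left h2 ha0.le, mul_nonneg ha0.le hkΔ,
        mul_nonneg ha0.le (mul_nonneg hPnn hsN0), mul_nonneg ha0.le (mul_nonneg hPnn (by linarith : (0:ℝ) ≤ ε/3))]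
  intro n hn1 hn2
  have hNn : N ≤ n := le_trans hΘN hn1
  obtain ⟨k, rfl⟩ : ∃ k, n = N + k := ⟨n - N, by omega⟩
  have hmain := claim k
  set P := ∏ j ∈ Finset.Ico N (N + k), (1 - α j) with hP
  have hPnn : 0 ≤ P := by
    apply Finset.prod_nonneg
    intro j hj
    have hj1 : 1 ≤ j := by have := (Finset.mem_Ico.mp hj).1; omega
    have := (hα j hj1).2
    linarith
  -- bound k Δ
  have hkK : k ≤ K := by omega
  have hkΔ : (k:ℝ) * Δ ≤ ε / 3 := by
    calc (k:ℝ) * Δ ≤ (K:ℝ) * Δ := by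
          apply mul_le_mul_of_nonneg_right _ hΔ0
          exact_mod_cast hkK
      _ ≤ ε / 3 := hΔK
  -- bound P * s N
  have hDεM : 0 < D * ε / (3 * M) := by positivity
  have hsplit : ∏ j ∈ Finset.Icc 1 (N + k - 1), (1 - α j)
      = (∏ j ∈ Finset.Icc 1 (N - 1), (1 - α j)) * P := by
    have e1 : Finset.Icc 1 (N + k - 1) = Finset.Ico 1 (N + k) := by
      rw [← Finset.Ico_add_one_right_eq_Icc]; congr 1; omega
    have e2 : Finset.Icc 1 (N - 1) = Finset.Ico 1 N := by
      rw [← Finset.Ico_add_one_right_eq_Icc]; congr 1; omega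
    rw [e1, e2, hP, ← Finset.prod_Ico_consecutive _ (by omega : 1 ≤ N) (by omega : N ≤ N + k)]
  have hθn : θ (D * ε / (3 * M)) ≤ N + k - 1 := by omega
  have hprodle := hθ _ hDεM (N + k - 1) hθn
  rw [hsplit] at hprodle
  have hDP : D * P ≤ D * ε / (3 * M) := by
    calc D * P ≤ (∏ j ∈ Finset.Icc 1 (N - 1), (1 - α j)) * P :=
          mul_le_mul_of_nonneg_right hDle hPnn
      _ ≤ D * ε / (3 * M) := hprodle
  have hPle : P ≤ ε / (3 * M) := by
    have h' : D * P ≤ D * (ε / (3 * M)) := by rw [← mul_div_assoc]; exact hDP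
    exact le_of_mul_le_mul_left h' hD
  have hsNM := (hs N hN1).2
  have hsN0 := (hs N hN1).1
  have hPsN : P * s N ≤ ε / 3 := by
    calc P * s N ≤ P * M := mul_le_mul_of_nonneg_left hsNM hPnn
      _ ≤ (ε / (3 * M)) * M := mul_le_mul_of_nonneg_right hPle hMpos.le
      _ = ε / 3 := by field_simp
  have h13 : ε / 3 * (1 - P) ≤ ε / 3 := by nlinarith
  linarith
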